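/- arXiv:2101.12592 — 2 statements merged into one kernel-verified Lean document; each statement's English description precedes it below -/
import Mathlib

section
/- Σ_{n≥0} (6n + 1) · C(2n,n)³ / 256^n = 4/π, where the sum is over all natural numbers n. -/
open Nat Filter Real Topology

noncomputable def wzA (n k : ℕ) : ℝ :=
  (6 * n + 4 * k + 1) * (n.centralBinom : ℝ) ^ 3 * (k.centralBinom : ℝ) ^ 2 /
    (((n + k).choose k : ℝ) ^ 2 * 256 ^ n * 16 ^ k)

noncomputable def wzG (n k : ℕ) : ℝ :=
  8 * n * (n.centralBinom : ℝ) ^ 3 * (k.centralBinom : ℝ) ^ 2 /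
    (((n + k).choose k : ℝ) ^ 2 * 256 ^ n * 16 ^ k)

lemma f3n (n k : ℕ) : (n + k + 1).choose k * (n + 1) = (n + k + 1) * (n + k).choose k := by
  have h1 : (n + k + 1).choose k = (n + k + 1).choose (n + 1) := by
    rw [← Nat.choose_symm (by omega : n + 1 ≤ n + k + 1)]; congr 1; omega
  have h2 : (n + k + 1) * (n + k).choose n = (n + k + 1).choose (n + 1) * (n + 1) := by
    simpa [Nat.succ_eq_add_one] using Nat.add_one_mul_choose_eq (n + k) n
  have h3 : (n + k).choose n = (n + k).choose k := by
    rw [← Nat.choose_symm (by omega : n ≤ n + k)]; congr 1; omega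
  rw [h1, ← h2, h3]

lemma f4n (n k : ℕ) : (n + (k + 1)).choose (k + 1) * (k + 1) = (n + k + 1) * (n + k).choose k := by
  have h2 : (n + k + 1) * (n + k).choose k = (n + k + 1).choose (k + 1) * (k + 1) := by
    simpa [Nat.succ_eq_add_one] using Nat.add_one_mul_choose_eq (n + k) k
  rw [show n + (k+1) = n + k + 1 by omega, ← h2]

lemma cb_pos (n : ℕ) : (0:ℝ) < (n.centralBinom : ℝ) := by
  exact_mod_cast n.centralBinom_pos

lemma cb_le (n : ℕ) : (n.centralBinom : ℝ) ≤ 4 ^ n := by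
  have h1 : n.centralBinom ≤ (2*n+1).choose n :=
    Nat.choose_le_choose n (by omega)
  have h2 := Nat.choose_middle_le_pow n
  exact_mod_cast h1.trans h2

lemma ch_pos (n k : ℕ) : (0:ℝ) < (((n + k).choose k : ℕ) : ℝ) := by
  have : 0 < (n + k).choose k := Nat.choose_pos (by omega)
  exact_mod_cast this

lemma ch_ge (n k : ℕ) (hn : 1 ≤ n) : ((k:ℝ) + 1) ≤ (((n + k).choose k : ℕ) : ℝ) := by
  have h1 : (k+1).choose k ≤ (n + k).choose k := Nat.choose_le_choose k (by omega)
  have h2 : (k+1).choose k = k + 1 := Nat.choose_succ_self_right k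
  have := h2 ▸ h1
  exact_mod_cast this

lemma cbsq (k : ℕ) : (2*(k:ℝ)+1) * (k.centralBinom : ℝ)^2 ≤ 16 ^ k := by
  induction k with
  | zero => simp [Nat.centralBinom]
  | succ k ih =>
      have h : ((k:ℝ)+1) * (((k+1).centralBinom : ℕ) : ℝ)
          = 2*(2*(k:ℝ)+1)*(k.centralBinom:ℝ) := by
        exact_mod_cast k.succ_mul_centralBinom_succ
      have hk : (0:ℝ) ≤ (k:ℝ) := Nat.cast_nonneg k
      have h16 : (0:ℝ) < 16 ^ k := by positivity
      have hcb := cb_pos k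
      have h2 : ((k:ℝ)+1)^2 * (((k+1).centralBinom : ℕ) : ℝ)^2
          = 4*(2*(k:ℝ)+1)^2*(k.centralBinom:ℝ)^2 := by
        rw [← mul_pow, h]; ring
      have key : (2*((k:ℝ)+1)+1) * (((k+1).centralBinom : ℕ) : ℝ)^2 * ((k:ℝ)+1)^2
          ≤ 16^(k+1) * ((k:ℝ)+1)^2 := by
        have e1 : (2*((k:ℝ)+1)+1) * (((k+1).centralBinom : ℕ) : ℝ)^2 * ((k:ℝ)+1)^2
            = (2*(k:ℝ)+3) * (4*(2*(k:ℝ)+1)^2*(k.centralBinom:ℝ)^2) := by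
          rw [← h2]; ring
        rw [e1, show (16:ℝ)^(k+1) = 16^k * 16 from pow_succ 16 k]
        nlinarith [mul_le_mul_of_nonneg_left ih
          (by positivity : (0:ℝ) ≤ 4*(2*(k:ℝ)+3)*(2*(k:ℝ)+1)), h16]
      have hpos : (0:ℝ) < ((k:ℝ)+1)^2 := by positivity
      push_cast
      exact le_of_mul_le_mul_right key hpos

lemma wz_step (n k : ℕ) : wzA n k + wzG (n+1) k = wzA n (k+1) + wzG n k := by
  have hn1 : ((n:ℝ) + 1) ≠ 0 := by positivity
  have hk1 : ((k:ℝ) + 1) ≠ 0 := by positivity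
  have f1' : ((n:ℝ)+1) * (((n+1).centralBinom : ℕ) : ℝ)
      = 2*(2*(n:ℝ)+1)*(n.centralBinom:ℝ) := by exact_mod_cast n.succ_mul_centralBinom_succ
  have f2' : ((k:ℝ)+1) * (((k+1).centralBinom : ℕ) : ℝ)
      = 2*(2*(k:ℝ)+1)*(k.centralBinom:ℝ) := by exact_mod_cast k.succ_mul_centralBinom_succ
  have f3' : ((((n+1) + k).choose k : ℕ) : ℝ) * ((n:ℝ)+1)
      = ((n:ℝ)+(k:ℝ)+1) * (((n+k).choose k : ℕ) : ℝ) := by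
    rw [show n+1+k = n+k+1 by omega]
    exact_mod_cast f3n n k
  have f4' : (((n + (k+1)).choose (k+1) : ℕ) : ℝ) * ((k:ℝ)+1)
      = ((n:ℝ)+(k:ℝ)+1) * (((n+k).choose k : ℕ) : ℝ) := by
    exact_mod_cast f4n n k
  have f1 : (((n+1).centralBinom : ℕ) : ℝ) = 2*(2*(n:ℝ)+1)*(n.centralBinom:ℝ)/((n:ℝ)+1) := by
    rw [eq_div_iff hn1]; linarith [f1']
  have f2 : (((k+1).centralBinom : ℕ) : ℝ) = 2*(2*(k:ℝ)+1)*(k.centralBinom:ℝ)/((k:ℝ)+1) := by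
    rw [eq_div_iff hk1]; linarith [f2']
  have f3 : ((((n+1) + k).choose k : ℕ) : ℝ)
      = ((n:ℝ)+(k:ℝ)+1) * (((n+k).choose k : ℕ) : ℝ)/((n:ℝ)+1) := by
    rw [eq_div_iff hn1]; linarith [f3']
  have f4 : (((n + (k+1)).choose (k+1) : ℕ) : ℝ)
      = ((n:ℝ)+(k:ℝ)+1) * (((n+k).choose k : ℕ) : ℝ)/((k:ℝ)+1) := by
    rw [eq_div_iff hk1]; linarith [f4']
  have hC : (0:ℝ) < (n.centralBinom : ℝ) := cb_pos n
  have hD : (0:ℝ) < (k.centralBinom : ℝ) := cb_pos k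
  have hE : (0:ℝ) < (((n+k).choose k : ℕ) : ℝ) := ch_pos n k
  have hnk1 : ((n:ℝ)+(k:ℝ)+1) ≠ 0 := by positivity
  unfold wzA wzG
  rw [f1, f2, f3, f4]
  push_cast
  rw [pow_succ (256:ℝ) n, pow_succ (16:ℝ) k]
  field_simp
  ring

lemma wzA_nonneg (n k : ℕ) : 0 ≤ wzA n k := by
  unfold wzA; positivity

lemma wzA_le (n k : ℕ) : wzA n k ≤ (6*n+5) * (1/4)^n := by
  have hC := cb_pos n
  have hD := cb_pos k
  have hE := ch_pos n k
  have hC3 : (n.centralBinom : ℝ)^3 ≤ 64 ^ n := by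
    calc (n.centralBinom : ℝ)^3 ≤ ((4:ℝ)^n)^3 :=
          pow_le_pow_left₀ (le_of_lt hC) (cb_le n) 3
      _ = 64 ^ n := by rw [← pow_mul, mul_comm, pow_mul]; norm_num
  have hD2 : (k.centralBinom : ℝ)^2 ≤ 16 ^ k := by
    calc (k.centralBinom : ℝ)^2 ≤ ((4:ℝ)^k)^2 :=
          pow_le_pow_left₀ (le_of_lt hD) (cb_le k) 2
      _ = 16 ^ k := by rw [← pow_mul, mul_comm, pow_mul]; norm_num
  unfold wzA
  rw [div_le_iff₀ (by positivity)]
  rcases Nat.eq_zero_or_pos n with rfl | hn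
  · -- n = 0
    simp only [Nat.centralBinom_zero, Nat.cast_zero, zero_add, Nat.choose_self,
      Nat.cast_one, pow_zero]
    have h1 : (4*(k:ℝ)+1) * (k.centralBinom:ℝ)^2 ≤ 2 * 16^k := by
      nlinarith [cbsq k, sq_nonneg ((k.centralBinom : ℝ))]
    push_cast
    nlinarith [pow_pos (show (0:ℝ) < 16 by norm_num) k]
  · -- n ≥ 1
    have hEk := ch_ge n k hn
    have hpoly : (6*(n:ℝ)+4*(k:ℝ)+1) ≤ (6*(n:ℝ)+5) * ((k:ℝ)+1)^2 := by
      have : (0:ℝ) ≤ (n:ℝ) := Nat.cast_nonneg n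
      nlinarith [(Nat.cast_nonneg k : (0:ℝ) ≤ (k:ℝ)), mul_nonneg this (sq_nonneg (k:ℝ)), mul_nonneg this (Nat.cast_nonneg k : (0:ℝ) ≤ (k:ℝ)), sq_nonneg (k:ℝ)]
    have hE2 : ((k:ℝ)+1)^2 ≤ (((n+k).choose k : ℕ) : ℝ)^2 :=
      pow_le_pow_left₀ (by positivity) hEk 2
    have step1 : (6*(n:ℝ)+4*(k:ℝ)+1) * (n.centralBinom : ℝ)^3 * (k.centralBinom : ℝ)^2
        ≤ ((6*(n:ℝ)+5) * ((k:ℝ)+1)^2) * (64^n * 16^k) := by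
      have hnn : (0:ℝ) ≤ (6*(n:ℝ)+4*(k:ℝ)+1) := by positivity
      have hCD : (n.centralBinom : ℝ)^3 * (k.centralBinom : ℝ)^2 ≤ 64^n * 16^k :=
        mul_le_mul hC3 hD2 (by positivity) (by positivity)
      calc (6*(n:ℝ)+4*(k:ℝ)+1) * (n.centralBinom : ℝ)^3 * (k.centralBinom : ℝ)^2
          = (6*(n:ℝ)+4*(k:ℝ)+1) * ((n.centralBinom : ℝ)^3 * (k.centralBinom : ℝ)^2) := by ring
        _ ≤ (6*(n:ℝ)+4*(k:ℝ)+1) * (64^n * 16^k) :=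
            mul_le_mul_of_nonneg_left hCD hnn
        _ ≤ ((6*(n:ℝ)+5) * ((k:ℝ)+1)^2) * (64^n * 16^k) :=
            mul_le_mul_of_nonneg_right hpoly (by positivity)
    have step2 : ((6*(n:ℝ)+5) * ((k:ℝ)+1)^2) * (64^n * 16^k)
        ≤ (6*(n:ℝ)+5) * (1/4)^n * ((((n+k).choose k : ℕ) : ℝ)^2 * 256^n * 16^k) := by
      have e : (6*(n:ℝ)+5) * (1/4)^n * ((((n+k).choose k : ℕ) : ℝ)^2 * 256^n * 16^k)
          = ((6*(n:ℝ)+5) * (((n+k).choose k : ℕ) : ℝ)^2) * (((1/4)^n * 256^n) * 16^k) := by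
        ring
      have e2 : ((1:ℝ)/4)^n * 256^n = 64^n := by
        rw [← mul_pow]; norm_num
      rw [e, e2]
      have : ((6*(n:ℝ)+5) * ((k:ℝ)+1)^2) ≤ ((6*(n:ℝ)+5) * (((n+k).choose k : ℕ) : ℝ)^2) :=
        mul_le_mul_of_nonneg_left hE2 (by positivity)
      calc ((6*(n:ℝ)+5) * ((k:ℝ)+1)^2) * (64^n * 16^k)
          ≤ ((6*(n:ℝ)+5) * (((n+k).choose k : ℕ) : ℝ)^2) * (64^n * 16^k) :=
            mul_le_mul_of_nonneg_right this (by positivity)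
        _ = ((6*(n:ℝ)+5) * (((n+k).choose k : ℕ) : ℝ)^2) * (64 ^ n * 16 ^ k) := rfl
    exact step1.trans step2

lemma bound_summable : Summable (fun n : ℕ => (6*(n:ℝ)+5) * (1/4)^n) := by
  have h1 : Summable (fun n : ℕ => (n:ℝ) * (1/4)^n) := by
    simpa using summable_pow_mul_geometric_of_norm_lt_one 1
      (show ‖(1/4 : ℝ)‖ < 1 by norm_num)
  have h2 : Summable (fun n : ℕ => (1/4 : ℝ)^n) :=
    summable_geometric_of_lt_one (by norm_num) (by norm_num)
  exact ((h1.mul_left 6).add (h2.mul_left 5)).congr (fun n => by ring)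

lemma wzA_summable (k : ℕ) : Summable (fun n => wzA n k) :=
  Summable.of_nonneg_of_le (fun n => wzA_nonneg n k) (fun n => wzA_le n k) bound_summable

lemma wzG_zero (k : ℕ) : wzG 0 k = 0 := by simp [wzG]

lemma wzG_nonneg (n k : ℕ) : 0 ≤ wzG n k := by unfold wzG; positivity

lemma wzG_le (n k : ℕ) : wzG n k ≤ 8 * n * (1/4)^n := by
  have hC := cb_pos n
  have hD := cb_pos k
  have hC3 : (n.centralBinom : ℝ)^3 ≤ 64 ^ n := by
    calc (n.centralBinom : ℝ)^3 ≤ ((4:ℝ)^n)^3 :=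
          pow_le_pow_left₀ (le_of_lt hC) (cb_le n) 3
      _ = 64 ^ n := by rw [← pow_mul, mul_comm, pow_mul]; norm_num
  have hD2 : (k.centralBinom : ℝ)^2 ≤ 16 ^ k := by
    calc (k.centralBinom : ℝ)^2 ≤ ((4:ℝ)^k)^2 :=
          pow_le_pow_left₀ (le_of_lt hD) (cb_le k) 2
      _ = 16 ^ k := by rw [← pow_mul, mul_comm, pow_mul]; norm_num
  have hE1 : (1:ℝ) ≤ (((n+k).choose k : ℕ) : ℝ) := by
    have : 0 < (n + k).choose k := Nat.choose_pos (by omega)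
    exact_mod_cast this
  unfold wzG
  rw [div_le_iff₀ (by positivity)]
  have key : 8 * (n:ℝ) * (n.centralBinom : ℝ)^3 * (k.centralBinom : ℝ)^2
      ≤ (8 * n) * (64^n * 16^k) := by
    have hCD : (n.centralBinom : ℝ)^3 * (k.centralBinom : ℝ)^2 ≤ 64^n * 16^k :=
      mul_le_mul hC3 hD2 (by positivity) (by positivity)
    calc 8 * (n:ℝ) * (n.centralBinom : ℝ)^3 * (k.centralBinom : ℝ)^2
        = (8 * (n:ℝ)) * ((n.centralBinom : ℝ)^3 * (k.centralBinom : ℝ)^2) := by ring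
      _ ≤ (8 * (n:ℝ)) * (64^n * 16^k) := by
          exact mul_le_mul_of_nonneg_left hCD (by positivity)
  refine key.trans ?_
  have e : 8 * (n:ℝ) * (1/4)^n * ((((n+k).choose k : ℕ) : ℝ)^2 * 256^n * 16^k)
      = (8 * (n:ℝ)) * (64^n * 16^k) * (((n+k).choose k : ℕ) : ℝ)^2 := by
    have e2 : ((1:ℝ)/4)^n * 256^n = 64^n := by rw [← mul_pow]; norm_num
    calc 8 * (n:ℝ) * (1/4)^n * ((((n+k).choose k : ℕ) : ℝ)^2 * 256^n * 16^k)
        = 8 * (n:ℝ) * ((1/4)^n * 256^n) * 16^k * (((n+k).choose k : ℕ) : ℝ)^2 := by ring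
      _ = (8 * (n:ℝ)) * (64^n * 16^k) * (((n+k).choose k : ℕ) : ℝ)^2 := by rw [e2]; ring
  rw [e]
  have h1 : (1:ℝ) ≤ (((n+k).choose k : ℕ) : ℝ)^2 := one_le_pow₀ hE1
  nlinarith [mul_nonneg (mul_nonneg (by positivity : (0:ℝ) ≤ 8*(n:ℝ))
    (by positivity : (0:ℝ) ≤ (64:ℝ)^n * 16^k)) (le_of_lt (by positivity : (0:ℝ) < (1:ℝ)))]

lemma partial_eq (k N : ℕ) :
    ∑ n ∈ Finset.range N, wzA n (k+1)
      = (∑ n ∈ Finset.range N, wzA n k) + wzG N k := by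
  induction N with
  | zero => simp [wzG_zero]
  | succ N ih =>
      rw [Finset.sum_range_succ, Finset.sum_range_succ, ih]
      have := wz_step N k
      linarith

lemma wzG_tendsto (k : ℕ) : Tendsto (fun N => wzG N k) atTop (𝓝 0) := by
  have hb : Tendsto (fun N : ℕ => 8 * (N:ℝ) * (1/4)^N) atTop (𝓝 0) := by
    have h1 : Summable (fun n : ℕ => 8 * (n:ℝ) * (1/4)^n) := by
      have := (summable_pow_mul_geometric_of_norm_lt_one 1
        (show ‖(1/4 : ℝ)‖ < 1 by norm_num)).mul_left 8
      exact this.congr (fun n => by ring)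
    exact h1.tendsto_atTop_zero
  exact tendsto_of_tendsto_of_tendsto_of_le_of_le tendsto_const_nhds hb
    (fun N => wzG_nonneg N k) (fun N => wzG_le N k)

lemma tsum_step (k : ℕ) : ∑' n, wzA n (k+1) = ∑' n, wzA n k := by
  have h1 := (wzA_summable (k+1)).hasSum.tendsto_sum_nat
  have h2 := (wzA_summable k).hasSum.tendsto_sum_nat
  have h3 : Tendsto (fun N => (∑ n ∈ Finset.range N, wzA n k) + wzG N k) atTop
      (𝓝 ((∑' n, wzA n k) + 0)) := h2.add (wzG_tendsto k)
  have h4 : Tendsto (fun N => ∑ n ∈ Finset.range N, wzA n (k+1)) atTop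
      (𝓝 ((∑' n, wzA n k) + 0)) := by
    simpa only [partial_eq k] using h3
  have := tendsto_nhds_unique h1 h4
  simpa using this

lemma wz_tsum_const (k : ℕ) : ∑' n, wzA n k = ∑' n, wzA n 0 := by
  induction k with
  | zero => rfl
  | succ k ih => rw [tsum_step k, ih]

-- limit of wzA n k as k → ∞, n ≥ 1

lemma wzA_tendsto_zero (n : ℕ) (hn : 1 ≤ n) :
    Tendsto (fun k => wzA n k) atTop (𝓝 0) := by
  have hb : Tendsto (fun k : ℕ => (6*(n:ℝ)+5) * (1/4)^n / ((k:ℝ)+1)) atTop (𝓝 0) := by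
    apply Tendsto.div_atTop tendsto_const_nhds
    exact tendsto_atTop_add_const_right _ _ tendsto_natCast_atTop_atTop
  apply tendsto_of_tendsto_of_tendsto_of_le_of_le tendsto_const_nhds hb
    (fun k => wzA_nonneg n k)
  intro k
  -- wzA n k ≤ (6n+5)(1/4)^n/(k+1)
  have hC := cb_pos n
  have hD := cb_pos k
  have hC3 : (n.centralBinom : ℝ)^3 ≤ 64 ^ n := by
    calc (n.centralBinom : ℝ)^3 ≤ ((4:ℝ)^n)^3 :=
          pow_le_pow_left₀ (le_of_lt hC) (cb_le n) 3
      _ = 64 ^ n := by rw [← pow_mul, mul_comm, pow_mul]; norm_num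
  have hD2 : (k.centralBinom : ℝ)^2 ≤ 16 ^ k := by
    calc (k.centralBinom : ℝ)^2 ≤ ((4:ℝ)^k)^2 :=
          pow_le_pow_left₀ (le_of_lt hD) (cb_le k) 2
      _ = 16 ^ k := by rw [← pow_mul, mul_comm, pow_mul]; norm_num
  have hEk := ch_ge n k hn
  have hE2 : ((k:ℝ)+1)^2 ≤ (((n+k).choose k : ℕ) : ℝ)^2 :=
    pow_le_pow_left₀ (by positivity) hEk 2
  have hpoly : (6*(n:ℝ)+4*(k:ℝ)+1) ≤ (6*(n:ℝ)+5) * ((k:ℝ)+1) := by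
    have h0 : (0:ℝ) ≤ (n:ℝ) := Nat.cast_nonneg n
    have h0' : (0:ℝ) ≤ (k:ℝ) := Nat.cast_nonneg k
    nlinarith [mul_nonneg h0 h0']
  have hE := ch_pos n k
  unfold wzA
  rw [div_le_iff₀ (by positivity), div_mul_eq_mul_div, le_div_iff₀ (by positivity)]
  -- (6n+4k+1) C³ D² (k+1) ≤ (6n+5)(1/4)^n (E² 256^n 16^k)
  have key : (6*(n:ℝ)+4*(k:ℝ)+1) * (n.centralBinom : ℝ)^3 * (k.centralBinom : ℝ)^2 * ((k:ℝ)+1)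
      ≤ ((6*(n:ℝ)+5) * ((k:ℝ)+1)) * (64^n * 16^k) * ((k:ℝ)+1) := by
    have hCD : (n.centralBinom : ℝ)^3 * (k.centralBinom : ℝ)^2 ≤ 64^n * 16^k :=
      mul_le_mul hC3 hD2 (by positivity) (by positivity)
    have h1 : (6*(n:ℝ)+4*(k:ℝ)+1) * ((n.centralBinom : ℝ)^3 * (k.centralBinom : ℝ)^2)
        ≤ ((6*(n:ℝ)+5) * ((k:ℝ)+1)) * (64^n * 16^k) :=
      mul_le_mul hpoly hCD (by positivity) (by positivity)
    calc (6*(n:ℝ)+4*(k:ℝ)+1) * (n.centralBinom : ℝ)^3 * (k.centralBinom : ℝ)^2 * ((k:ℝ)+1)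
        = ((6*(n:ℝ)+4*(k:ℝ)+1) * ((n.centralBinom : ℝ)^3 * (k.centralBinom : ℝ)^2)) * ((k:ℝ)+1) := by
          ring
      _ ≤ (((6*(n:ℝ)+5) * ((k:ℝ)+1)) * (64^n * 16^k)) * ((k:ℝ)+1) :=
          mul_le_mul_of_nonneg_right h1 (by positivity)
  refine key.trans ?_
  have e2 : ((1:ℝ)/4)^n * 256^n = 64^n := by rw [← mul_pow]; norm_num
  have final : ((6*(n:ℝ)+5) * ((k:ℝ)+1)) * (64^n * 16^k) * ((k:ℝ)+1)
      = ((6*(n:ℝ)+5) * (1/4)^n) * (((k:ℝ)+1)^2 * 256^n * 16^k) := by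
    calc ((6*(n:ℝ)+5) * ((k:ℝ)+1)) * (64^n * 16^k) * ((k:ℝ)+1)
        = ((6*(n:ℝ)+5)) * (((k:ℝ)+1)^2 * ((1/4)^n * 256^n) * 16^k) := by rw [e2]; ring
      _ = ((6*(n:ℝ)+5) * (1/4)^n) * (((k:ℝ)+1)^2 * 256^n * 16^k) := by ring
  rw [final]
  have : (((k:ℝ)+1)^2 * 256^n * 16^k) ≤ ((((n+k).choose k : ℕ) : ℝ)^2 * 256^n * 16^k) := by
    have := mul_le_mul_of_nonneg_right hE2 (by positivity : (0:ℝ) ≤ (256:ℝ)^n)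
    exact mul_le_mul_of_nonneg_right this (by positivity)
  exact mul_le_mul_of_nonneg_left this (by positivity)

lemma wzA_zero_eq (k : ℕ) :
    wzA 0 k = (4*(k:ℝ)+1) * (k.centralBinom : ℝ)^2 / 16 ^ k := by
  simp [wzA]

lemma cb_factorial (k : ℕ) :
    (k.centralBinom : ℝ) * (k ! : ℝ) * (k ! : ℝ) = ((2*k)! : ℝ) := by
  have h := Nat.choose_mul_factorial_mul_factorial (show k ≤ 2*k by omega)
  have h2 : 2*k - k = k := by omega
  rw [h2] at h
  exact_mod_cast h

lemma wzA_zero_W (k : ℕ) :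
    wzA 0 k = ((4*(k:ℝ)+1)/(2*(k:ℝ)+1)) * (Real.Wallis.W k)⁻¹ := by
  rw [wzA_zero_eq, Real.Wallis.W_eq_factorial_ratio]
  have hfac : ((k ! : ℕ) : ℝ) ≠ 0 := by positivity
  have h2k : (((2*k)! : ℕ) : ℝ) ≠ 0 := by positivity
  have hcb : (k.centralBinom : ℝ) = ((2*k)! : ℝ) / ((k ! : ℝ) * (k ! : ℝ)) := by
    rw [eq_div_iff (by positivity)]
    have := cb_factorial k
    linarith [this]
  have h16 : ((2:ℝ) ^ (4*k)) = 16 ^ k := by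
    rw [pow_mul]; norm_num
  rw [hcb, h16]
  have hk1 : (2*(k:ℝ)+1) ≠ 0 := by positivity
  have h16k : ((16:ℝ)^k) ≠ 0 := by positivity
  field_simp

lemma aux_ratio_tendsto :
    Tendsto (fun k : ℕ => (4*(k:ℝ)+1)/(2*(k:ℝ)+1)) atTop (𝓝 2) := by
  have h1 : Tendsto (fun k : ℕ => (2*(k:ℝ)+1)) atTop atTop := by
    apply tendsto_atTop_add_const_right
    exact Tendsto.const_mul_atTop (by norm_num) tendsto_natCast_atTop_atTop
  have h0 : Tendsto (fun k : ℕ => ((2*(k:ℝ)+1))⁻¹) atTop (𝓝 0) :=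
    h1.inv_tendsto_atTop
  have h2 : Tendsto (fun k : ℕ => 2 - ((2*(k:ℝ)+1))⁻¹) atTop (𝓝 (2 - 0)) :=
    tendsto_const_nhds.sub h0
  rw [sub_zero] at h2
  refine h2.congr (fun k => ?_)
  have hk1 : (2*(k:ℝ)+1) ≠ 0 := by positivity
  field_simp
  ring

lemma wzA_zero_tendsto : Tendsto (fun k => wzA 0 k) atTop (𝓝 (4/π)) := by
  have hW := Real.Wallis.tendsto_W_nhds_pi_div_two
  have hWinv : Tendsto (fun k => (Real.Wallis.W k)⁻¹) atTop (𝓝 (π/2)⁻¹) :=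
    hW.inv₀ (ne_of_gt (by positivity))
  have h := aux_ratio_tendsto.mul hWinv
  have e : 2 * (π/2)⁻¹ = 4/π := by
    rw [inv_div, mul_div_assoc']
    norm_num
  rw [e] at h
  refine h.congr (fun k => ?_)
  rw [wzA_zero_W]

theorem ramanujan_pi_formula_35 :
    ∑' n : ℕ, (6 * n + 1) * (n.centralBinom : ℝ) ^ 3 / 256 ^ n = 4 / Real.pi := by
  have hab : ∀ n : ℕ, Tendsto (fun k => wzA n k) atTop
      (𝓝 (if n = 0 then 4/π else 0)) := by
    intro n
    rcases Nat.eq_zero_or_pos n with rfl | hn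
    · simpa using wzA_zero_tendsto
    · simpa [Nat.pos_iff_ne_zero.mp hn] using wzA_tendsto_zero n hn
  have hbound : ∀ᶠ k : ℕ in atTop, ∀ n : ℕ, ‖wzA n k‖ ≤ (6*(n:ℝ)+5) * (1/4)^n := by
    refine Eventually.of_forall (fun k n => ?_)
    rw [Real.norm_eq_abs, abs_of_nonneg (wzA_nonneg n k)]
    exact wzA_le n k
  have hT : Tendsto (fun k : ℕ => ∑' n, wzA n k) atTop
      (𝓝 (∑' n : ℕ, (if n = 0 then 4/π else 0))) :=
    tendsto_tsum_of_dominated_convergence bound_summable hab hbound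
  have h2 : (fun k : ℕ => ∑' n, wzA n k) = (fun _ : ℕ => ∑' n, wzA n 0) :=
    funext wz_tsum_const
  rw [h2] at hT
  have h3 : (∑' n, wzA n 0) = ∑' n : ℕ, (if n = 0 then 4/π else 0) :=
    tendsto_nhds_unique tendsto_const_nhds hT
  have h4 : (∑' n : ℕ, (if n = 0 then 4/π else 0)) = 4/π := tsum_ite_eq 0 (fun _ => 4/π)
  have h5 : ∀ n : ℕ, wzA n 0 = (6 * n + 1) * (n.centralBinom : ℝ) ^ 3 / 256 ^ n := by
    intro n
    simp [wzA]
  calc ∑' n : ℕ, (6 * n + 1) * (n.centralBinom : ℝ) ^ 3 / 256 ^ n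
      = ∑' n, wzA n 0 := by rw [tsum_congr h5]
    _ = 4/π := h3.trans h4
end

section
/- Σ_{n≥1} (21n − 8) / (n³ · C(2n,n)³) = π²/6, where the sum is over all integers n ≥ 1. -/
set_option maxHeartbeats 1000000

open Filter Finset

noncomputable def FF (n k : ℕ) : ℝ :=
  (k.factorial : ℝ) ^ 2 * (n.factorial : ℝ) ^ 4 /
    (((n + k + 1).factorial : ℝ) ^ 2 * ((2 * n).factorial : ℝ))

noncomputable def GG (n k : ℕ) : ℝ :=
  ((2 * k + 3 * n + 3 : ℕ) : ℝ) / (2 * (2 * n + 1)) * FF n k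

lemma fac_pos (m : ℕ) : (0:ℝ) < (m.factorial : ℝ) := by
  exact_mod_cast m.factorial_pos

lemma FF_nonneg (n k : ℕ) : 0 ≤ FF n k := by
  unfold FF; positivity

lemma GG_nonneg (n k : ℕ) : 0 ≤ GG n k := by
  unfold GG
  apply mul_nonneg _ (FF_nonneg n k)
  positivity

/-- The WZ pair identity. -/
lemma pair (n k : ℕ) : FF n k - FF (n + 1) k = GG n k - GG n (k + 1) := by
  unfold GG
  unfold FF
  have h1 : ((n + 1).factorial : ℝ) = (n + 1) * n.factorial := by
    rw [Nat.factorial_succ]; push_cast; ring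
  have h2 : ((n + 1 + k + 1).factorial : ℝ) = (n + k + 2) * (n + k + 1).factorial := by
    have : n + 1 + k + 1 = (n + k + 1) + 1 := by ring
    rw [this, Nat.factorial_succ]; push_cast; ring
  have h3 : ((2 * (n + 1)).factorial : ℝ) =
      (2 * n + 2) * ((2 * n + 1) * (2 * n).factorial) := by
    have : 2 * (n + 1) = (2 * n + 1) + 1 := by ring
    rw [this, Nat.factorial_succ, Nat.factorial_succ]; push_cast; ring
  have h4 : ((n + (k + 1) + 1).factorial : ℝ) = (n + k + 2) * (n + k + 1).factorial := by
    have : n + (k + 1) + 1 = (n + k + 1) + 1 := by ring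
    rw [this, Nat.factorial_succ]; push_cast; ring
  have h5 : (((k + 1)).factorial : ℝ) = (k + 1) * k.factorial := by
    rw [Nat.factorial_succ]; push_cast; ring
  rw [h1, h2, h3, h4, h5]
  have ha := fac_pos k
  have hb := fac_pos n
  have hc := fac_pos (n + k + 1)
  have hd := fac_pos (2 * n)
  have hk2 : (0:ℝ) < (n:ℝ) + k + 2 := by positivity
  push_cast
  field_simp
  ring

/-- Bound: FF n k ≤ n!² / ((2n)! (k+1)²). -/
lemma FF_le (n k : ℕ) :
    FF n k ≤ (n.factorial : ℝ) ^ 2 / (((2 * n).factorial : ℝ) * ((k : ℝ) + 1) ^ 2) := by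
  unfold FF
  have key : ((k + 1).factorial : ℝ) * (n.factorial : ℝ) ≤ ((n + k + 1).factorial : ℝ) := by
    have h := Nat.factorial_mul_factorial_dvd_factorial_add (k + 1) n
    have h2 : (k + 1) + n = n + k + 1 := by ring
    rw [h2] at h
    exact_mod_cast Nat.le_of_dvd (n + k + 1).factorial_pos h
  have hfs : ((k + 1).factorial : ℝ) = ((k : ℝ) + 1) * (k.factorial : ℝ) := by
    rw [Nat.factorial_succ]; push_cast; ring
  rw [hfs] at key
  have ha := fac_pos k
  have hb := fac_pos n
  have hc := fac_pos (n + k + 1)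
  have hd := fac_pos (2 * n)
  have hk1 : (0:ℝ) < (k:ℝ) + 1 := by positivity
  rw [div_le_div_iff₀ (by positivity) (by positivity)]
  have key2 : (((k : ℝ) + 1) * (k.factorial : ℝ) * (n.factorial : ℝ)) ^ 2 ≤
      ((n + k + 1).factorial : ℝ) ^ 2 := by
    apply pow_le_pow_left₀ (by positivity) key
  have key3 := mul_le_mul_of_nonneg_right key2
    (le_of_lt (mul_pos (pow_pos hb 2) hd) : (0:ℝ) ≤ (n.factorial : ℝ) ^ 2 * ((2 * n).factorial : ℝ))
  nlinarith [key3]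

/-- Basel problem, shifted. -/
lemma basel : HasSum (fun k : ℕ => 1 / ((k : ℝ) + 1) ^ 2) (Real.pi ^ 2 / 6) := by
  have h := hasSum_zeta_two
  have h3 : HasSum (fun n : ℕ => 1 / ((n + 1 : ℕ) : ℝ) ^ 2) (Real.pi ^ 2 / 6) :=
    (hasSum_nat_add_iff (f := fun n : ℕ => 1 / (n : ℝ) ^ 2) (g := Real.pi ^ 2 / 6) 1).mpr
      (by simpa using h)
  convert h3 using 2 with k
  push_cast
  ring

lemma summable_inv_sq : Summable (fun k : ℕ => 1 / ((k : ℝ) + 1) ^ 2) := basel.summable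

lemma FF_summable (n m : ℕ) : Summable (fun k : ℕ => FF n (k + m)) := by
  have hbound : ∀ k : ℕ, FF n (k + m) ≤
      (n.factorial : ℝ) ^ 2 / ((2 * n).factorial : ℝ) * (1 / ((k : ℝ) + 1) ^ 2) := by
    intro k
    have h := FF_le n (k + m)
    have hd := fac_pos (2 * n)
    have hb := fac_pos n
    have h1 : ((k : ℝ) + 1) ^ 2 ≤ (((k + m : ℕ) : ℝ) + 1) ^ 2 := by
      apply pow_le_pow_left₀ (by positivity)
      push_cast; linarith [Nat.cast_nonneg (α := ℝ) m]
    calc FF n (k + m) ≤ (n.factorial : ℝ) ^ 2 / (((2 * n).factorial : ℝ) * (((k + m : ℕ) : ℝ) + 1) ^ 2) := h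
      _ ≤ (n.factorial : ℝ) ^ 2 / (((2 * n).factorial : ℝ) * (((k : ℕ) : ℝ) + 1) ^ 2) := by
          apply div_le_div_of_nonneg_left (by positivity) (by positivity)
          apply mul_le_mul_of_nonneg_left h1 (le_of_lt hd)
      _ = (n.factorial : ℝ) ^ 2 / ((2 * n).factorial : ℝ) * (1 / ((k : ℝ) + 1) ^ 2) := by
          field_simp
  exact Summable.of_nonneg_of_le (fun k => FF_nonneg n (k + m)) hbound
    (summable_inv_sq.mul_left _)

noncomputable def TT (n : ℕ) : ℝ := ∑' k : ℕ, FF n (k + n)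

/-- GG bound used for the limit in k. -/
lemma GG_le (n k : ℕ) :
    GG n k ≤ (3 * (n : ℝ) + 5) * ((n.factorial : ℝ) ^ 2 / ((2 * n).factorial : ℝ)) * (1 / ((k : ℝ) + 1)) := by
  unfold GG
  have hF := FF_le n k
  have hFnn := FF_nonneg n k
  have hd := fac_pos (2 * n)
  have hb := fac_pos n
  have hk1 : (0:ℝ) < (k:ℝ) + 1 := by positivity
  have hcoef : ((2 * k + 3 * n + 3 : ℕ) : ℝ) / (2 * (2 * n + 1)) ≤ (3 * (n:ℝ) + 5) * ((k:ℝ) + 1) := by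
    rw [div_le_iff₀ (by positivity)]
    push_cast
    nlinarith [Nat.cast_nonneg (α := ℝ) n, Nat.cast_nonneg (α := ℝ) k,
      mul_nonneg (Nat.cast_nonneg (α := ℝ) n) (Nat.cast_nonneg (α := ℝ) k)]
  calc ((2 * k + 3 * n + 3 : ℕ) : ℝ) / (2 * (2 * n + 1)) * FF n k
      ≤ ((3 * (n:ℝ) + 5) * ((k:ℝ) + 1)) * ((n.factorial : ℝ) ^ 2 / (((2 * n).factorial : ℝ) * ((k : ℝ) + 1) ^ 2)) := by
        apply mul_le_mul hcoef hF hFnn (by positivity)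
    _ = (3 * (n : ℝ) + 5) * ((n.factorial : ℝ) ^ 2 / ((2 * n).factorial : ℝ)) * (1 / ((k : ℝ) + 1)) := by
        field_simp

lemma GG_tendsto (n m : ℕ) : Tendsto (fun k : ℕ => GG n (k + m)) atTop (nhds 0) := by
  apply squeeze_zero (fun k => GG_nonneg n (k + m))
    (g := fun k : ℕ => (3 * (n : ℝ) + 5) * ((n.factorial : ℝ) ^ 2 / ((2 * n).factorial : ℝ)) * (1 / ((k : ℝ) + 1)))
  · intro k
    have h := GG_le n (k + m)
    have h2 : 1 / (((k + m : ℕ) : ℝ) + 1) ≤ 1 / ((k : ℝ) + 1) := by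
      apply div_le_div_of_nonneg_left one_pos.le (by positivity)
      push_cast; linarith [Nat.cast_nonneg (α := ℝ) m]
    have hb := fac_pos n
    have hd := fac_pos (2 * n)
    calc GG n (k + m) ≤ _ := h
      _ ≤ _ := by
        apply mul_le_mul_of_nonneg_left h2 (by positivity)
  · have := tendsto_one_div_add_atTop_nhds_zero_nat.const_mul
      ((3 * (n : ℝ) + 5) * ((n.factorial : ℝ) ^ 2 / ((2 * n).factorial : ℝ)))
    simpa [mul_comm] using this

/-- G is antitone in k. -/
lemma GG_antitone (n k : ℕ) : GG n (k + 1) ≤ GG n k := by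
  unfold GG
  have hratio : FF n (k + 1) * ((n : ℝ) + k + 2) ^ 2 = FF n k * ((k : ℝ) + 1) ^ 2 := by
    unfold FF
    have h4 : ((n + (k + 1) + 1).factorial : ℝ) = ((n:ℝ) + k + 2) * (n + k + 1).factorial := by
      have : n + (k + 1) + 1 = (n + k + 1) + 1 := by ring
      rw [this, Nat.factorial_succ]; push_cast; ring
    have h5 : (((k + 1)).factorial : ℝ) = ((k:ℝ) + 1) * k.factorial := by
      rw [Nat.factorial_succ]; push_cast; ring
    rw [h4, h5]
    have ha := fac_pos k
    have hb := fac_pos n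
    have hc := fac_pos (n + k + 1)
    have hd := fac_pos (2 * n)
    have hk2 : (0:ℝ) < (n:ℝ) + k + 2 := by positivity
    field_simp
  have hFk := FF_nonneg n k
  have hk2 : (0:ℝ) < ((n:ℝ) + k + 2) ^ 2 := by positivity
  have hF1 : FF n (k + 1) = FF n k * ((k : ℝ) + 1) ^ 2 / ((n : ℝ) + k + 2) ^ 2 := by
    field_simp at hratio ⊢
    linarith [hratio]
  have key : ((2 * (k+1) + 3 * n + 3 : ℕ) : ℝ) * ((k : ℝ) + 1) ^ 2 ≤
      ((2 * k + 3 * n + 3 : ℕ) : ℝ) * ((n : ℝ) + k + 2) ^ 2 := by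
    push_cast
    nlinarith [Nat.cast_nonneg (α := ℝ) n, Nat.cast_nonneg (α := ℝ) k,
      mul_nonneg (Nat.cast_nonneg (α := ℝ) n) (Nat.cast_nonneg (α := ℝ) k),
      sq_nonneg ((k:ℝ)), sq_nonneg ((n:ℝ))]
  have h2n1 : (0:ℝ) < 2 * (2 * (n:ℝ) + 1) := by positivity
  have e : ((2 * k + 3 * n + 3 : ℕ) : ℝ) / (2 * (2 * ↑n + 1)) * FF n k -
      ((2 * (k+1) + 3 * n + 3 : ℕ) : ℝ) / (2 * (2 * ↑n + 1)) * FF n (k + 1) =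
      FF n k * ((((2 * k + 3 * n + 3 : ℕ) : ℝ) * ((n : ℝ) + k + 2) ^ 2 -
        ((2 * (k+1) + 3 * n + 3 : ℕ) : ℝ) * ((k : ℝ) + 1) ^ 2) /
        (2 * (2 * (n:ℝ) + 1) * ((n : ℝ) + k + 2) ^ 2)) := by
    rw [hF1]
    field_simp
  have hnn : 0 ≤ FF n k * ((((2 * k + 3 * n + 3 : ℕ) : ℝ) * ((n : ℝ) + k + 2) ^ 2 -
        ((2 * (k+1) + 3 * n + 3 : ℕ) : ℝ) * ((k : ℝ) + 1) ^ 2) /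
        (2 * (2 * (n:ℝ) + 1) * ((n : ℝ) + k + 2) ^ 2)) := by
    apply mul_nonneg hFk
    apply div_nonneg (by linarith [key]) (by positivity)
  linarith [e, hnn]

/-- Telescoping: ∑_k (GG n (k+m) - GG n (k+m+1)) = GG n m. -/
lemma GG_telescope (n m : ℕ) :
    HasSum (fun k : ℕ => GG n (k + m) - GG n (k + m + 1)) (GG n m) := by
  have hnn : ∀ k : ℕ, 0 ≤ GG n (k + m) - GG n (k + m + 1) := by
    intro k
    have := GG_antitone n (k + m)
    linarith
  rw [hasSum_iff_tendsto_nat_of_nonneg hnn]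
  have hps : ∀ N : ℕ, ∑ i ∈ range N, (GG n (i + m) - GG n (i + m + 1)) = GG n m - GG n (N + m) := by
    intro N
    have h0 := Finset.sum_range_sub' (fun i => GG n (i + m)) N
    have hc : ∀ i : ℕ, GG n (i + m + 1) = GG n (i + 1 + m) := fun i => by
      rw [add_right_comm]
    simp only [hc]
    simpa using h0
  simp only [hps]
  have := (GG_tendsto n m).const_sub (GG n m)
  simpa using this

/-- Staircase step: TT n - TT (n+1) = GG n n + FF (n+1) n. -/
lemma TT_step (n : ℕ) : TT n - TT (n + 1) = GG n n + FF (n + 1) n := by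
  have hs1 : Summable (fun k : ℕ => FF n (k + n)) := FF_summable n n
  have hs2 : Summable (fun k : ℕ => FF (n + 1) (k + n)) := FF_summable (n + 1) n
  have h1 : ∑' k : ℕ, FF (n + 1) (k + n) = FF (n + 1) n + TT (n + 1) := by
    rw [hs2.tsum_eq_zero_add]
    congr 1
    · simp
    · unfold TT
      congr 1 with k
      congr 1
      omega
  have h2 : TT n - ∑' k : ℕ, FF (n + 1) (k + n) = GG n n := by
    unfold TT
    rw [← hs1.tsum_sub hs2]
    have heq : ∀ k : ℕ, FF n (k + n) - FF (n + 1) (k + n) = GG n (k + n) - GG n (k + n + 1) :=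
      fun k => pair n (k + n)
    rw [tsum_congr heq]
    exact (GG_telescope n n).tsum_eq
  linarith [h1, h2]

/-- TT 0 = π²/6. -/
lemma TT_zero : TT 0 = Real.pi ^ 2 / 6 := by
  unfold TT
  have heq : ∀ k : ℕ, FF 0 (k + 0) = 1 / ((k : ℝ) + 1) ^ 2 := by
    intro k
    unfold FF
    simp only [Nat.add_zero, Nat.zero_add, Nat.mul_zero, Nat.factorial_zero, Nat.cast_one]
    rw [Nat.factorial_succ]
    have ha := fac_pos k
    push_cast
    field_simp
  rw [tsum_congr heq]
  exact basel.tsum_eq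

lemma two_pow_mul_sq_factorial_le (n : ℕ) : 2 ^ n * n.factorial ^ 2 ≤ (2 * n).factorial := by
  induction n with
  | zero => simp
  | succ m ih =>
    have h1 : 2 * (m + 1) = (2 * m + 1) + 1 := by ring
    rw [h1, Nat.factorial_succ, Nat.factorial_succ, Nat.factorial_succ]
    have h2 : 2 ^ (m + 1) * ((m + 1) * m.factorial) ^ 2 =
        (2 * ((m + 1) * (m + 1))) * (2 ^ m * m.factorial ^ 2) := by ring
    rw [h2]
    calc (2 * ((m + 1) * (m + 1))) * (2 ^ m * m.factorial ^ 2)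
        ≤ (2 * ((m + 1) * (m + 1))) * (2 * m).factorial := by
          exact Nat.mul_le_mul_left _ ih
      _ ≤ ((2 * m + 1) + 1) * ((2 * m + 1) * (2 * m).factorial) := by
          have : (2 * ((m + 1) * (m + 1))) ≤ ((2 * m + 1) + 1) * (2 * m + 1) := by nlinarith
          calc (2 * ((m + 1) * (m + 1))) * (2 * m).factorial
              ≤ (((2 * m + 1) + 1) * (2 * m + 1)) * (2 * m).factorial :=
                Nat.mul_le_mul_right _ this
            _ = ((2 * m + 1) + 1) * ((2 * m + 1) * (2 * m).factorial) := by ring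

lemma TT_nonneg (n : ℕ) : 0 ≤ TT n :=
  tsum_nonneg (fun k => FF_nonneg n (k + n))

lemma TT_le (n : ℕ) : TT n ≤ Real.pi ^ 2 / 6 * (1 / 2) ^ n := by
  have hb := fac_pos n
  have hd := fac_pos (2 * n)
  have h1 : TT n ≤ ∑' k : ℕ, (n.factorial : ℝ) ^ 2 / ((2 * n).factorial : ℝ) * (1 / ((k : ℝ) + 1) ^ 2) := by
    apply Summable.tsum_le_tsum _ (FF_summable n n) (summable_inv_sq.mul_left _)
    intro k
    have h := FF_le n (k + n)
    have h1 : ((k : ℝ) + 1) ^ 2 ≤ (((k + n : ℕ) : ℝ) + 1) ^ 2 := by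
      apply pow_le_pow_left₀ (by positivity)
      push_cast; linarith [Nat.cast_nonneg (α := ℝ) n]
    calc FF n (k + n) ≤ (n.factorial : ℝ) ^ 2 / (((2 * n).factorial : ℝ) * (((k + n : ℕ) : ℝ) + 1) ^ 2) := h
      _ ≤ (n.factorial : ℝ) ^ 2 / (((2 * n).factorial : ℝ) * (((k : ℕ) : ℝ) + 1) ^ 2) := by
          apply div_le_div_of_nonneg_left (by positivity) (by positivity)
          exact mul_le_mul_of_nonneg_left h1 (le_of_lt hd)
      _ = (n.factorial : ℝ) ^ 2 / ((2 * n).factorial : ℝ) * (1 / ((k : ℝ) + 1) ^ 2) := by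
          field_simp
  rw [tsum_mul_left, basel.tsum_eq] at h1
  have h2 : (n.factorial : ℝ) ^ 2 / ((2 * n).factorial : ℝ) ≤ (1 / 2) ^ n := by
    rw [div_le_iff₀ hd]
    have := two_pow_mul_sq_factorial_le n
    have hc : (2:ℝ) ^ n * (n.factorial : ℝ) ^ 2 ≤ ((2 * n).factorial : ℝ) := by
      exact_mod_cast this
    rw [div_pow, one_pow]
    rw [div_mul_eq_mul_div, le_div_iff₀ (by positivity)]
    calc (n.factorial : ℝ) ^ 2 * 2 ^ n = 2 ^ n * (n.factorial : ℝ) ^ 2 := by ring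
      _ ≤ ((2 * n).factorial : ℝ) := hc
      _ = 1 * ((2 * n).factorial : ℝ) := by ring
  calc TT n ≤ (n.factorial : ℝ) ^ 2 / ((2 * n).factorial : ℝ) * (Real.pi ^ 2 / 6) := h1
    _ ≤ (1 / 2) ^ n * (Real.pi ^ 2 / 6) := by
        apply mul_le_mul_of_nonneg_right h2 (by positivity)
    _ = Real.pi ^ 2 / 6 * (1 / 2) ^ n := by ring

lemma TT_tendsto : Tendsto TT atTop (nhds 0) := by
  apply squeeze_zero TT_nonneg TT_le
  have := (tendsto_pow_atTop_nhds_zero_of_lt_one (r := (1:ℝ)/2) (by norm_num) (by norm_num)).const_mul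
    (Real.pi ^ 2 / 6)
  simpa using this

/-- The staircase term equals the series term. -/
lemma term_eq (n : ℕ) :
    GG n n + FF (n + 1) n =
      (21 * ((n : ℝ) + 1) - 8) / (((n : ℝ) + 1) ^ 3 * (((n + 1).centralBinom : ℕ) : ℝ) ^ 3) := by
  have hcb : (((n + 1).centralBinom : ℕ) : ℝ) * ((n + 1).factorial : ℝ) * ((n + 1).factorial : ℝ)
      = ((2 * (n + 1)).factorial : ℝ) := by
    have h := Nat.choose_mul_factorial_mul_factorial (n := 2 * (n + 1)) (k := n + 1) (by omega)
    have h2 : 2 * (n + 1) - (n + 1) = n + 1 := by omega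
    rw [h2] at h
    rw [Nat.centralBinom]
    exact_mod_cast h
  unfold GG FF
  have h1 : ((n + 1).factorial : ℝ) = ((n:ℝ) + 1) * n.factorial := by
    rw [Nat.factorial_succ]; push_cast; ring
  have h3 : ((2 * (n + 1)).factorial : ℝ) = (2 * (n:ℝ) + 2) * ((2 * (n:ℝ) + 1) * (2 * n).factorial) := by
    have he : 2 * (n + 1) = (2 * n + 1) + 1 := by ring
    rw [he, Nat.factorial_succ, Nat.factorial_succ]; push_cast; ring
  have h6 : ((n + n + 1).factorial : ℝ) = (2 * (n:ℝ) + 1) * (2 * n).factorial := by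
    have he : n + n + 1 = (2 * n) + 1 := by ring
    rw [he, Nat.factorial_succ]; push_cast; ring
  have h7 : ((n + 1 + n + 1).factorial : ℝ) = ((2 * (n + 1)).factorial : ℝ) := by
    have he : n + 1 + n + 1 = 2 * (n + 1) := by omega
    rw [he]
  have ha := fac_pos n
  have hd := fac_pos (2 * n)
  have hcbpos : (0:ℝ) < (((n + 1).centralBinom : ℕ) : ℝ) := by
    exact_mod_cast (n+1).centralBinom_pos
  rw [h1, h3] at hcb
  -- express centralBinom in terms of factorials
  have hcb2 : (((n + 1).centralBinom : ℕ) : ℝ) =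
      (2 * (n:ℝ) + 2) * ((2 * (n:ℝ) + 1) * (2 * n).factorial) /
        ((((n:ℝ) + 1) * n.factorial) * (((n:ℝ) + 1) * n.factorial)) := by
    rw [eq_div_iff (by positivity)]
    nlinarith [hcb]
  rw [h6, h7, h3, h1, hcb2]
  have hn1 : (0:ℝ) < (n:ℝ) + 1 := by positivity
  push_cast
  field_simp
  ring

theorem upside_down_formula_43 :
    ∑' n : ℕ, (21 * ((n : ℝ) + 1) - 8) /
        (((n : ℝ) + 1) ^ 3 * ((n + 1).centralBinom : ℝ) ^ 3)
      = Real.pi ^ 2 / 6 := by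
  have hterm : ∀ n : ℕ, (21 * ((n : ℝ) + 1) - 8) /
      (((n : ℝ) + 1) ^ 3 * ((n + 1).centralBinom : ℝ) ^ 3) = TT n - TT (n + 1) := by
    intro n
    rw [TT_step n, term_eq n]
  have hnn : ∀ n : ℕ, 0 ≤ (21 * ((n : ℝ) + 1) - 8) /
      (((n : ℝ) + 1) ^ 3 * ((n + 1).centralBinom : ℝ) ^ 3) := by
    intro n
    apply div_nonneg
    · have : (0:ℝ) ≤ (n:ℝ) := Nat.cast_nonneg n
      linarith
    · have hcbpos : (0:ℝ) < (((n + 1).centralBinom : ℕ) : ℝ) := by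
        exact_mod_cast (n+1).centralBinom_pos
      positivity
  have hhs : HasSum (fun n : ℕ => (21 * ((n : ℝ) + 1) - 8) /
      (((n : ℝ) + 1) ^ 3 * ((n + 1).centralBinom : ℝ) ^ 3)) (Real.pi ^ 2 / 6) := by
    rw [hasSum_iff_tendsto_nat_of_nonneg hnn]
    have hps : ∀ N : ℕ, ∑ i ∈ range N, (21 * ((i : ℝ) + 1) - 8) /
        (((i : ℝ) + 1) ^ 3 * ((i + 1).centralBinom : ℝ) ^ 3) = TT 0 - TT N := by
      intro N
      rw [← Finset.sum_range_sub' TT N]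
      exact Finset.sum_congr rfl (fun i _ => hterm i)
    simp only [hps, TT_zero]
    have := TT_tendsto.const_sub (Real.pi ^ 2 / 6)
    simpa using this
  exact hhs.tsum_eq
end
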